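/- arXiv:1703.00262 — 4 statements merged into one kernel-verified Lean document; each statement's English description precedes it below -/
import Mathlib

section
/- Let Y be a real random variable that is sub-Gaussian with variance factor σ² > 0, i.e. ln E[exp(sY)] ≤ σ²s²/2 for all s ∈ ℝ. Then for all 0 ≤ s < 1/(2σ²), ln E[exp(sY²)] ≤ σ²s + σ⁴s²/(1 − 2σ²s). In particular, Y² − 2σ² is sub-Gamma on the right tail with variance factor 8σ⁴ and scale parameter 4σ² (after shifting, for the centered version Y² − E[Y²]). -/
open MeasureTheory Real


-- analytic inequality
lemma neg_log_le_aux {u : ℝ} (h0 : 0 ≤ u) (h1 : u < 1) :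
    -Real.log (1 - u) ≤ u + u ^ 2 / (2 * (1 - u)) := by
  have hv : 0 < 1 - u := by linarith
  set A := u + u ^ 2 / (2 * (1 - u)) with hA
  have hA0 : 0 ≤ A := by positivity
  have hA2 : A * (2 * (1 - u)) = u * (2 - u) := by
    rw [hA, add_mul, div_mul_cancel₀ _ (mul_pos two_pos hv).ne']; ring
  have h2 : 1 + A + A ^ 2 / 2 ≤ Real.exp A := Real.quadratic_le_exp_of_nonneg hA0
  have hsq : (A * (2 * (1 - u))) ^ 2 = (u * (2 - u)) ^ 2 := by rw [hA2]
  have h6 : (A ^ 2 * (1 - u) - u ^ 2) * (4 * (1 - u)) = u ^ 2 * u ^ 2 := by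
    linear_combination hsq
  clear_value A
  have h5 : u ^ 2 ≤ A ^ 2 * (1 - u) := by nlinarith [h6, hv, sq_nonneg (u * u)]
  have h3 : (1 : ℝ) ≤ (1 + A + A ^ 2 / 2) * (1 - u) := by nlinarith [h5, hA2, hv]
  have h4 : (1 - u)⁻¹ ≤ Real.exp A := by
    rw [inv_le_iff_one_le_mul₀ hv]
    exact h3.trans (by nlinarith [Real.exp_pos A])
  calc -Real.log (1 - u) = Real.log (1 - u)⁻¹ := (Real.log_inv _).symm
    _ ≤ Real.log (Real.exp A) := Real.log_le_log (by positivity) h4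
    _ = A := Real.log_exp A

-- gaussian representation
lemma gauss_repr {s : ℝ} (hs : 0 ≤ s) (y : ℝ) :
    Real.exp (s * y ^ 2) * Real.sqrt (2 * π) =
      ∫ t : ℝ, Real.exp (Real.sqrt (2 * s) * t * y - t ^ 2 / 2) := by
  set c := Real.sqrt (2 * s) with hc
  have hc2 : c ^ 2 = 2 * s := Real.sq_sqrt (by linarith)
  have key : ∀ t : ℝ, Real.exp (c * t * y - t ^ 2 / 2)
      = Real.exp (s * y ^ 2) * Real.exp (-(1/2 : ℝ) * (t - c * y) ^ 2) := by
    intro t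
    rw [← Real.exp_add]
    congr 1
    linear_combination (y ^ 2 / 2) * hc2
  simp_rw [key]
  rw [integral_const_mul]
  congr 1
  have := MeasureTheory.integral_sub_right_eq_self (μ := volume)
    (fun u : ℝ => Real.exp (-(1/2 : ℝ) * u ^ 2)) (c * y)
  rw [this, integral_gaussian]
  norm_num
  ring

lemma key_bound {Ω : Type*} [MeasurableSpace Ω] (μ : Measure Ω) [IsProbabilityMeasure μ]
    (Y : Ω → ℝ) (hY : Measurable Y) (σ2 : ℝ) (hσ2 : 0 < σ2)
    (hint : ∀ s : ℝ, Integrable (fun ω => Real.exp (s * Y ω)) μ)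
    (hsub : ∀ s : ℝ, Real.log (∫ ω, Real.exp (s * Y ω) ∂μ) ≤ σ2 * s ^ 2 / 2)
    (s : ℝ) (hs0 : 0 ≤ s) (hs : s < 1 / (2 * σ2)) :
    Integrable (fun ω => Real.exp (s * (Y ω) ^ 2)) μ ∧
    ∫ ω, Real.exp (s * (Y ω) ^ 2) ∂μ ≤ (Real.sqrt (1 - 2 * σ2 * s))⁻¹ := by
  have hu1 : 2 * σ2 * s < 1 := by
    have h := (lt_div_iff₀ (by positivity : (0:ℝ) < 2 * σ2)).mp hs
    linarith
  have hb' : 0 < 1/2 - σ2 * s := by linarith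
  have hc2 : Real.sqrt (2 * s) ^ 2 = 2 * s := Real.sq_sqrt (by linarith)
  have meas2 : Measurable fun p : Ω × ℝ =>
      Real.exp (Real.sqrt (2 * s) * p.2 * Y p.1 - p.2 ^ 2 / 2) := by
    apply Measurable.exp
    exact ((measurable_const.mul measurable_snd).mul (hY.comp measurable_fst)).sub
      ((measurable_snd.pow_const 2).div_const 2)
  have step1 : ∀ ω, (∫⁻ t : ℝ, ENNReal.ofReal (Real.exp (Real.sqrt (2 * s) * t * Y ω - t ^ 2 / 2))) =
      ENNReal.ofReal (Real.exp (s * (Y ω) ^ 2)) * ENNReal.ofReal (Real.sqrt (2 * π)) := by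
    intro ω
    have key : ∀ t : ℝ, Real.exp (Real.sqrt (2 * s) * t * Y ω - t ^ 2 / 2)
        = Real.exp (s * (Y ω) ^ 2) * Real.exp (-(1/2 : ℝ) * (t - Real.sqrt (2 * s) * Y ω) ^ 2) := by
      intro t; rw [← Real.exp_add]; congr 1
      linear_combination ((Y ω) ^ 2 / 2) * hc2
    have hig : Integrable (fun t : ℝ => Real.exp (Real.sqrt (2 * s) * t * Y ω - t ^ 2 / 2)) := by
      simp_rw [key]
      exact ((integrable_exp_neg_mul_sq (by norm_num : (0:ℝ) < 1/2)).comp_sub_right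
        (Real.sqrt (2 * s) * Y ω)).const_mul _
    rw [← MeasureTheory.ofReal_integral_eq_lintegral_ofReal hig
      (Filter.Eventually.of_forall fun t => (Real.exp_pos _).le)]
    rw [← gauss_repr hs0 (Y ω), ENNReal.ofReal_mul (Real.exp_pos _).le]
  have swap := MeasureTheory.lintegral_lintegral_swap (μ := μ) (ν := (volume : Measure ℝ))
      (f := fun ω t => ENNReal.ofReal (Real.exp (Real.sqrt (2 * s) * t * Y ω - t ^ 2 / 2)))
      (meas2.ennreal_ofReal.aemeasurable)
  have inner : ∀ t : ℝ,
      (∫⁻ ω, ENNReal.ofReal (Real.exp (Real.sqrt (2 * s) * t * Y ω - t ^ 2 / 2)) ∂μ)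
      ≤ ENNReal.ofReal (Real.exp (-(1/2 - σ2 * s) * t ^ 2)) := by
    intro t
    have hsplit : ∀ ω, Real.exp (Real.sqrt (2 * s) * t * Y ω - t ^ 2 / 2)
        = Real.exp ((Real.sqrt (2 * s) * t) * Y ω) * Real.exp (-(t ^ 2 / 2)) := by
      intro ω; rw [← Real.exp_add]; ring_nf
    calc (∫⁻ ω, ENNReal.ofReal (Real.exp (Real.sqrt (2 * s) * t * Y ω - t ^ 2 / 2)) ∂μ)
        = (∫⁻ ω, ENNReal.ofReal (Real.exp ((Real.sqrt (2 * s) * t) * Y ω)) ∂μ)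
            * ENNReal.ofReal (Real.exp (-(t ^ 2 / 2))) := by
          simp_rw [hsplit, ENNReal.ofReal_mul (Real.exp_pos _).le]
          exact lintegral_mul_const _ ((hY.const_mul (Real.sqrt (2 * s) * t)).exp.ennreal_ofReal)
      _ ≤ ENNReal.ofReal (Real.exp (σ2 * (Real.sqrt (2 * s) * t) ^ 2 / 2))
            * ENNReal.ofReal (Real.exp (-(t ^ 2 / 2))) := by
          apply mul_le_mul_left
          rw [← MeasureTheory.ofReal_integral_eq_lintegral_ofReal (hint (Real.sqrt (2 * s) * t))
            (Filter.Eventually.of_forall fun ω => (Real.exp_pos _).le)]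
          apply ENNReal.ofReal_le_ofReal
          have hpos : 0 < ∫ ω, Real.exp ((Real.sqrt (2 * s) * t) * Y ω) ∂μ :=
            integral_exp_pos (hint (Real.sqrt (2 * s) * t))
          calc (∫ ω, Real.exp ((Real.sqrt (2 * s) * t) * Y ω) ∂μ)
              = Real.exp (Real.log (∫ ω, Real.exp ((Real.sqrt (2 * s) * t) * Y ω) ∂μ)) :=
                (Real.exp_log hpos).symm
            _ ≤ _ := Real.exp_le_exp.mpr (hsub (Real.sqrt (2 * s) * t))
      _ = ENNReal.ofReal (Real.exp (-(1/2 - σ2 * s) * t ^ 2)) := by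
          rw [← ENNReal.ofReal_mul (Real.exp_pos _).le, ← Real.exp_add]
          congr 2
          linear_combination (σ2 * t ^ 2 / 2) * hc2
  have total : (∫⁻ ω, ENNReal.ofReal (Real.exp (s * (Y ω) ^ 2)) ∂μ)
      * ENNReal.ofReal (Real.sqrt (2 * π))
      ≤ ENNReal.ofReal (Real.sqrt (π / (1/2 - σ2 * s))) := by
    rw [← lintegral_mul_const _ (((hY.pow_const 2).const_mul s).exp.ennreal_ofReal)]
    calc (∫⁻ ω, ENNReal.ofReal (Real.exp (s * (Y ω) ^ 2)) * ENNReal.ofReal (Real.sqrt (2 * π)) ∂μ)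
        = ∫⁻ ω, ∫⁻ t : ℝ, ENNReal.ofReal
            (Real.exp (Real.sqrt (2 * s) * t * Y ω - t ^ 2 / 2)) ∂volume ∂μ := by
          simp_rw [step1]
      _ = ∫⁻ t : ℝ, ∫⁻ ω, ENNReal.ofReal
            (Real.exp (Real.sqrt (2 * s) * t * Y ω - t ^ 2 / 2)) ∂μ ∂volume := swap
      _ ≤ ∫⁻ t : ℝ, ENNReal.ofReal (Real.exp (-(1/2 - σ2 * s) * t ^ 2)) ∂volume :=
          lintegral_mono inner
      _ = ENNReal.ofReal (Real.sqrt (π / (1/2 - σ2 * s))) := by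
          rw [← MeasureTheory.ofReal_integral_eq_lintegral_ofReal
            (integrable_exp_neg_mul_sq hb')
            (Filter.Eventually.of_forall fun t => (Real.exp_pos _).le), integral_gaussian]
  have h12 : (0:ℝ) < 1 - 2 * σ2 * s := by linarith
  have hM : Real.sqrt (π / (1/2 - σ2 * s))
      = (Real.sqrt (1 - 2 * σ2 * s))⁻¹ * Real.sqrt (2 * π) := by
    rw [← Real.sqrt_inv, ← Real.sqrt_mul (by positivity)]
    congr 1
    rw [inv_mul_eq_div, div_eq_div_iff hb'.ne' h12.ne']
    ring
  have hsqrt2pi : 0 < Real.sqrt (2 * π) := Real.sqrt_pos.mpr (by positivity)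
  have hI : (∫⁻ ω, ENNReal.ofReal (Real.exp (s * (Y ω) ^ 2)) ∂μ)
      ≤ ENNReal.ofReal ((Real.sqrt (1 - 2 * σ2 * s))⁻¹) := by
    rw [hM, ENNReal.ofReal_mul (by positivity)] at total
    exact (ENNReal.mul_le_mul_iff_left (ENNReal.ofReal_pos.mpr hsqrt2pi).ne'
      ENNReal.ofReal_ne_top).mp total
  have hmeas : AEStronglyMeasurable (fun ω => Real.exp (s * (Y ω) ^ 2)) μ :=
    (((hY.pow_const 2).const_mul s).exp).aestronglyMeasurable
  have hintg : Integrable (fun ω => Real.exp (s * (Y ω) ^ 2)) μ := by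
    refine ⟨hmeas, ?_⟩
    rw [hasFiniteIntegral_iff_ofReal (Filter.Eventually.of_forall fun ω => (Real.exp_pos _).le)]
    exact lt_of_le_of_lt hI ENNReal.ofReal_lt_top
  refine ⟨hintg, ?_⟩
  rw [integral_eq_lintegral_of_nonneg_ae
    (Filter.Eventually.of_forall fun ω => (Real.exp_pos _).le) hmeas]
  exact ENNReal.toReal_le_of_le_ofReal (by positivity) hI

/-- The square of a sub-Gaussian random variable: moment generating function bound,
and the sub-Gamma (right tail) property of the shifted square `Y² − 2σ²`. -/
theorem square_of_subGaussian
    {Ω : Type*} [MeasurableSpace Ω] (μ : Measure Ω) [IsProbabilityMeasure μ]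
    (Y : Ω → ℝ) (hY : Measurable Y)
    (σ2 : ℝ) (hσ2 : 0 < σ2)
    (hint : ∀ s : ℝ, Integrable (fun ω => Real.exp (s * Y ω)) μ)
    (hsub : ∀ s : ℝ, Real.log (∫ ω, Real.exp (s * Y ω) ∂μ) ≤ σ2 * s ^ 2 / 2) :
    (∀ s : ℝ, 0 ≤ s → s < 1 / (2 * σ2) →
      Integrable (fun ω => Real.exp (s * (Y ω) ^ 2)) μ ∧
      Real.log (∫ ω, Real.exp (s * (Y ω) ^ 2) ∂μ) ≤
        σ2 * s + σ2 ^ 2 * s ^ 2 / (1 - 2 * σ2 * s)) ∧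
    (∀ s : ℝ, 0 < s → s < 1 / (4 * σ2) →
      Real.log (∫ ω, Real.exp (s * ((Y ω) ^ 2 - 2 * σ2)) ∂μ) ≤
        (8 * σ2 ^ 2) * s ^ 2 / (2 * (1 - 4 * σ2 * s))) := by
  have part1 : ∀ s : ℝ, 0 ≤ s → s < 1 / (2 * σ2) →
      Integrable (fun ω => Real.exp (s * (Y ω) ^ 2)) μ ∧
      (1 : ℝ) ≤ ∫ ω, Real.exp (s * (Y ω) ^ 2) ∂μ ∧
      Real.log (∫ ω, Real.exp (s * (Y ω) ^ 2) ∂μ) ≤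
        σ2 * s + σ2 ^ 2 * s ^ 2 / (1 - 2 * σ2 * s) := by
    intro s hs0 hs
    obtain ⟨hintg, hle⟩ := key_bound μ Y hY σ2 hσ2 hint hsub s hs0 hs
    have hu1 : 2 * σ2 * s < 1 := by
      have h := (lt_div_iff₀ (by positivity : (0:ℝ) < 2 * σ2)).mp hs; linarith
    have h12 : (0:ℝ) < 1 - 2 * σ2 * s := by linarith
    have h1le : (1:ℝ) ≤ ∫ ω, Real.exp (s * (Y ω) ^ 2) ∂μ := by
      have hone : ∫ (_ : Ω), (1:ℝ) ∂μ = 1 := by simp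
      rw [← hone]
      refine integral_mono (integrable_const 1) hintg fun ω => ?_
      have h0 : 0 ≤ s * (Y ω) ^ 2 := mul_nonneg hs0 (sq_nonneg _)
      linarith [Real.add_one_le_exp (s * (Y ω) ^ 2)]
    refine ⟨hintg, h1le, ?_⟩
    have hlog : Real.log (∫ ω, Real.exp (s * (Y ω) ^ 2) ∂μ)
        ≤ Real.log ((Real.sqrt (1 - 2 * σ2 * s))⁻¹) := Real.log_le_log (by linarith) hle
    have hloginv : Real.log ((Real.sqrt (1 - 2 * σ2 * s))⁻¹)
        = -(1/2) * Real.log (1 - 2 * σ2 * s) := by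
      rw [Real.log_inv, Real.log_sqrt h12.le]; ring
    have hneg := neg_log_le_aux (u := 2 * σ2 * s)
      (mul_nonneg (by linarith) hs0) hu1
    have heq2 : σ2 * s + σ2 ^ 2 * s ^ 2 / (1 - 2 * σ2 * s)
        = (1/2) * (2 * σ2 * s + (2 * σ2 * s) ^ 2 / (2 * (1 - 2 * σ2 * s))) := by
      field_simp
    linarith
  refine ⟨fun s hs0 hs => ⟨(part1 s hs0 hs).1, (part1 s hs0 hs).2.2⟩, ?_⟩
  intro s hs0 hs
  have hlt : s < 1 / (2 * σ2) := by
    refine lt_of_lt_of_le hs ?_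
    exact one_div_le_one_div_of_le (by positivity) (by linarith)
  obtain ⟨hintg, h1le, hlog⟩ := part1 s hs0.le hlt
  have heq : ∀ ω, Real.exp (s * ((Y ω) ^ 2 - 2 * σ2))
      = Real.exp (s * (Y ω) ^ 2) * Real.exp (-(2 * σ2 * s)) := by
    intro ω; rw [← Real.exp_add]; ring_nf
  have hInteq : ∫ ω, Real.exp (s * ((Y ω) ^ 2 - 2 * σ2)) ∂μ
      = (∫ ω, Real.exp (s * (Y ω) ^ 2) ∂μ) * Real.exp (-(2 * σ2 * s)) := by
    simp_rw [heq]
    exact integral_mul_const _ _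
  rw [hInteq, Real.log_mul (by linarith) (Real.exp_ne_zero _), Real.log_exp]
  have hd2 : (0:ℝ) < 1 - 4 * σ2 * s := by
    have h := (lt_div_iff₀ (by positivity : (0:ℝ) < 4 * σ2)).mp hs; linarith
  have hd1 : (1:ℝ)/2 ≤ 1 - 2 * σ2 * s := by nlinarith
  have hp : (0:ℝ) < σ2 ^ 2 * s ^ 2 := by positivity
  have hσs : 0 < σ2 * s := mul_pos hσ2 hs0
  have h1 : σ2 ^ 2 * s ^ 2 / (1 - 2 * σ2 * s) ≤ 2 * (σ2 ^ 2 * s ^ 2) := by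
    rw [div_le_iff₀ (by linarith)]
    nlinarith [hp, hd1]
  have h2 : 4 * (σ2 ^ 2 * s ^ 2) ≤ 8 * σ2 ^ 2 * s ^ 2 / (2 * (1 - 4 * σ2 * s)) := by
    rw [le_div_iff₀ (by linarith)]
    nlinarith [mul_nonneg hp.le hσs.le]
  linarith [hp]
end

section
/- Let {y_k}, {u_k}, {a_k}, {b_k} be sequences of nonnegative random variables adapted to a filtration {F_k} such that almost surely Σ_k a_k < ∞ and Σ_k b_k < ∞, and for all k, E[y_{k+1} | F_k] ≤ (1 + a_k) y_k − u_k + b_k. Then almost surely the sequence {y_k} converges (to a finite limit) and Σ_k u_k < ∞. -/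
open MeasureTheory Filter

section RSAux

variable {Ω : Type*}

/-- Product `∏_{j<k} (1 + a j)`. -/
noncomputable def rsP (a : ℕ → Ω → ℝ) (k : ℕ) (ω : Ω) : ℝ :=
  ∏ j ∈ Finset.range k, (1 + a j ω)

/-- Partial sum `∑_{j<k} u j / rsP a (j+1)`. -/
noncomputable def rsS (u a : ℕ → Ω → ℝ) (k : ℕ) (ω : Ω) : ℝ :=
  ∑ j ∈ Finset.range k, u j ω / rsP a (j + 1) ω

/-- The transformed process. -/
noncomputable def rsW (y u b a : ℕ → Ω → ℝ) (k : ℕ) (ω : Ω) : ℝ :=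
  y k ω / rsP a k ω + rsS u a k ω - rsS b a k ω

lemma rsP_zero (a : ℕ → Ω → ℝ) (ω : Ω) : rsP a 0 ω = 1 := by simp [rsP]

lemma rsP_succ (a : ℕ → Ω → ℝ) (k : ℕ) (ω : Ω) :
    rsP a (k + 1) ω = rsP a k ω * (1 + a k ω) := Finset.prod_range_succ _ _

lemma rsS_zero (u a : ℕ → Ω → ℝ) (ω : Ω) : rsS u a 0 ω = 0 := by simp [rsS]

lemma rsS_succ (u a : ℕ → Ω → ℝ) (k : ℕ) (ω : Ω) :
    rsS u a (k + 1) ω = rsS u a k ω + u k ω / rsP a (k + 1) ω := Finset.sum_range_succ _ _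

lemma rsP_one_le {a : ℕ → Ω → ℝ} {ω : Ω} (ha : ∀ j, 0 ≤ a j ω) (k : ℕ) :
    1 ≤ rsP a k ω := by
  calc (1:ℝ) = ∏ _j ∈ Finset.range k, 1 := by simp
    _ ≤ ∏ j ∈ Finset.range k, (1 + a j ω) :=
      Finset.prod_le_prod (fun j _ => zero_le_one) (fun j _ => by linarith [ha j])

lemma rsP_pos {a : ℕ → Ω → ℝ} {ω : Ω} (ha : ∀ j, 0 ≤ a j ω) (k : ℕ) :
    0 < rsP a k ω := lt_of_lt_of_le one_pos (rsP_one_le ha k)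

lemma rsS_nonneg {u a : ℕ → Ω → ℝ} {ω : Ω} (hu : ∀ j, 0 ≤ u j ω) (ha : ∀ j, 0 ≤ a j ω)
    (k : ℕ) : 0 ≤ rsS u a k ω :=
  Finset.sum_nonneg fun j _ => div_nonneg (hu j) (rsP_pos ha _).le

lemma rsS_mono {u a : ℕ → Ω → ℝ} {ω : Ω} (hu : ∀ j, 0 ≤ u j ω) (ha : ∀ j, 0 ≤ a j ω)
    (k : ℕ) : rsS u a k ω ≤ rsS u a (k + 1) ω := by
  rw [rsS_succ]
  have := div_nonneg (hu k) (rsP_pos ha (k + 1)).le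
  linarith

lemma rsP_stronglyMeasurable {m0 : MeasurableSpace Ω} {F : Filtration ℕ m0}
    {a : ℕ → Ω → ℝ} (ha : Adapted F a) {k n : ℕ} (h : n ≤ k + 1) :
    StronglyMeasurable[F k] (rsP a n) := by
  show StronglyMeasurable[F k] fun ω => ∏ j ∈ Finset.range n, (1 + a j ω)
  refine Finset.stronglyMeasurable_fun_prod _ fun j hj => ?_
  have hj' : j ≤ k := by
    have := Finset.mem_range.1 hj
    omega
  exact stronglyMeasurable_const.add ((ha j).stronglyMeasurable.mono (F.mono hj'))

lemma rsS_stronglyMeasurable {m0 : MeasurableSpace Ω} {F : Filtration ℕ m0}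
    {u a : ℕ → Ω → ℝ} (hu : Adapted F u) (ha : Adapted F a) {k n : ℕ} (h : n ≤ k + 1) :
    StronglyMeasurable[F k] (rsS u a n) := by
  show StronglyMeasurable[F k] fun ω => ∑ j ∈ Finset.range n, u j ω / rsP a (j + 1) ω
  refine Finset.stronglyMeasurable_fun_sum _ fun j hj => ?_
  have hj' : j ≤ k := by
    have := Finset.mem_range.1 hj
    omega
  exact (((hu j).stronglyMeasurable.mono (F.mono hj')).measurable.div
    (rsP_stronglyMeasurable ha (by omega : j + 1 ≤ k + 1)).measurable).stronglyMeasurable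

lemma rsW_stronglyMeasurable {m0 : MeasurableSpace Ω} {F : Filtration ℕ m0}
    {y u b a : ℕ → Ω → ℝ} (hy : Adapted F y) (hu : Adapted F u) (hb : Adapted F b)
    (ha : Adapted F a) (k : ℕ) :
    StronglyMeasurable[F k] (rsW y u b a k) := by
  show StronglyMeasurable[F k] fun ω => y k ω / rsP a k ω + rsS u a k ω - rsS b a k ω
  exact ((((hy k).div
    (rsP_stronglyMeasurable ha (Nat.le_succ k)).measurable).stronglyMeasurable).add
    (rsS_stronglyMeasurable hu ha (Nat.le_succ k))).sub
    (rsS_stronglyMeasurable hb ha (Nat.le_succ k))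

/-- Pointwise stopped-process lemma. -/
lemma rs_stop_aux (c : ℝ) (W T Wc : ℕ → ℝ)
    (hT0 : T 0 = 0) (hTmono : ∀ k, T k ≤ T (k + 1)) (hWT : ∀ k, -T k ≤ W k)
    (hWc0 : Wc 0 = W 0)
    (hWcs : ∀ k, Wc (k + 1) = Wc k + (if T (k + 1) ≤ c then (1 : ℝ) else 0) * (W (k + 1) - W k))
    (hc : 0 ≤ c) :
    ∀ k, (T (k + 1) ≤ c → Wc k = W k) ∧ -c ≤ Wc k := by
  intro k
  induction k with
  | zero =>
    refine ⟨fun _ => hWc0, ?_⟩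
    rw [hWc0]
    have := hWT 0
    rw [hT0] at this
    linarith
  | succ k ih =>
    by_cases h : T (k + 1) ≤ c
    · have hWck : Wc (k + 1) = W (k + 1) := by
        rw [hWcs k, if_pos h, ih.1 h]; ring
      refine ⟨fun _ => hWck, ?_⟩
      rw [hWck]
      have := hWT (k + 1)
      linarith
    · have hWck : Wc (k + 1) = Wc k := by rw [hWcs k, if_neg h]; ring
      refine ⟨fun h2 => absurd (le_trans (hTmono (k + 1)) h2) h, ?_⟩
      rw [hWck]; exact ih.2

/-- Pointwise final analysis lemma. -/
lemma rs_pointwise (y u a b : ℕ → ℝ)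
    (hy : ∀ k, 0 ≤ y k) (hu : ∀ k, 0 ≤ u k) (ha : ∀ k, 0 ≤ a k) (hb : ∀ k, 0 ≤ b k)
    (hasum : Summable a) (hbsum : Summable b)
    (hW : ∃ l, Tendsto (fun k =>
        y k / (∏ j ∈ Finset.range k, (1 + a j))
        + ∑ j ∈ Finset.range k, u j / (∏ i ∈ Finset.range (j + 1), (1 + a i))
        - ∑ j ∈ Finset.range k, b j / (∏ i ∈ Finset.range (j + 1), (1 + a i)))
      atTop (nhds l)) :
    (∃ l, Tendsto (fun k => y k) atTop (nhds l)) ∧ Summable u := by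
  set P : ℕ → ℝ := fun k => ∏ j ∈ Finset.range k, (1 + a j) with hPdef
  have hP1 : ∀ k, 1 ≤ P k := by
    intro k
    show (1:ℝ) ≤ ∏ j ∈ Finset.range k, (1 + a j)
    calc (1:ℝ) = ∏ _j ∈ Finset.range k, 1 := by simp
      _ ≤ ∏ j ∈ Finset.range k, (1 + a j) :=
        Finset.prod_le_prod (fun j _ => zero_le_one) (fun j _ => by linarith [ha j])
  have hP0 : ∀ k, (0:ℝ) < P k := fun k => lt_of_lt_of_le one_pos (hP1 k)
  have hPmono : Monotone P := by
    apply monotone_nat_of_le_succ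
    intro k
    have : P (k+1) = P k * (1 + a k) := Finset.prod_range_succ (fun j => 1 + a j) k
    nlinarith [hP0 k, ha k]
  have hPbd : ∀ k, P k ≤ Real.exp (∑' j, a j) := by
    intro k
    have h1 : P k ≤ ∏ j ∈ Finset.range k, Real.exp (a j) := by
      show (∏ j ∈ Finset.range k, (1 + a j)) ≤ _
      exact Finset.prod_le_prod (fun j _ => by linarith [ha j])
        (fun j _ => by linarith [Real.add_one_le_exp (a j)])
    rw [← Real.exp_sum] at h1
    exact h1.trans (Real.exp_le_exp.2 (hasum.sum_le_tsum _ (fun j _ => ha j)))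
  have hPbdd : BddAbove (Set.range P) := ⟨Real.exp (∑' j, a j), by rintro _ ⟨k, rfl⟩; exact hPbd k⟩
  have hPlim : Tendsto P atTop (nhds (⨆ k, P k)) := tendsto_atTop_ciSup hPmono hPbdd
  have hbP : Summable (fun j => b j / P (j + 1)) :=
    Summable.of_nonneg_of_le (fun j => div_nonneg (hb j) (hP0 _).le)
      (fun j => div_le_self (hb j) (hP1 _)) hbsum
  obtain ⟨l, hl⟩ := hW
  have hTlim : Tendsto (fun k => ∑ j ∈ Finset.range k, b j / P (j + 1)) atTop
      (nhds (∑' j, b j / P (j + 1))) := hbP.hasSum.tendsto_sum_nat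
  -- S is bounded
  have hSbd : ∀ k, ∑ j ∈ Finset.range k, u j / P (j + 1) ≤
      (y k / P k + ∑ j ∈ Finset.range k, u j / P (j + 1)
        - ∑ j ∈ Finset.range k, b j / P (j + 1)) + ∑' j, b j / P (j + 1) := by
    intro k
    have h1 : 0 ≤ y k / P k := div_nonneg (hy k) (hP0 k).le
    have h2 : ∑ j ∈ Finset.range k, b j / P (j + 1) ≤ ∑' j, b j / P (j + 1) :=
      hbP.sum_le_tsum _ (fun j _ => div_nonneg (hb j) (hP0 _).le)
    linarith
  have hl' : Tendsto (fun k => y k / P k + ∑ j ∈ Finset.range k, u j / P (j + 1)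
      - ∑ j ∈ Finset.range k, b j / P (j + 1)) atTop (nhds l) := hl
  obtain ⟨M, hM⟩ := hl'.bddAbove_range
  have hM' : ∀ n, y n / P n + ∑ j ∈ Finset.range n, u j / P (j + 1)
      - ∑ j ∈ Finset.range n, b j / P (j + 1) ≤ M := fun n => hM ⟨n, rfl⟩
  have huP : Summable (fun j => u j / P (j + 1)) := by
    apply summable_of_sum_range_le (c := M + ∑' j, b j / P (j + 1))
      (fun j => div_nonneg (hu j) (hP0 _).le)
    intro n
    exact (hSbd n).trans (add_le_add_left (hM' n) _)
  have hu_sum : Summable u := by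
    refine Summable.of_nonneg_of_le hu (fun j => ?_) (huP.mul_right (Real.exp (∑' j, a j)))
    calc u j = u j / P (j + 1) * P (j + 1) := (div_mul_cancel₀ _ (hP0 _).ne').symm
      _ ≤ u j / P (j + 1) * Real.exp (∑' i, a i) :=
        mul_le_mul_of_nonneg_left (hPbd _) (div_nonneg (hu j) (hP0 _).le)
  refine ⟨?_, hu_sum⟩
  have hSlim : Tendsto (fun k => ∑ j ∈ Finset.range k, u j / P (j + 1)) atTop
      (nhds (∑' j, u j / P (j + 1))) := huP.hasSum.tendsto_sum_nat
  have hyP : Tendsto (fun k => y k / P k) atTop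
      (nhds (l - ∑' j, u j / P (j + 1) + ∑' j, b j / P (j + 1))) := by
    have := (hl'.sub hSlim).add hTlim
    refine this.congr (fun k => ?_)
    ring
  refine ⟨(l - ∑' j, u j / P (j + 1) + ∑' j, b j / P (j + 1)) * (⨆ k, P k), ?_⟩
  have := hyP.mul hPlim
  refine this.congr (fun k => ?_)
  exact div_mul_cancel₀ _ (hP0 k).ne'

end RSAux

/-- Robbins–Siegmund convergence theorem for nonnegative almost-supermartingales. -/
theorem robbins_siegmund
    {Ω : Type*} [m0 : MeasurableSpace Ω] (μ : Measure Ω) [IsProbabilityMeasure μ]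
    (F : Filtration ℕ m0)
    (y u a b : ℕ → Ω → ℝ)
    (hy_adapted : Adapted F y) (hu_adapted : Adapted F u)
    (ha_adapted : Adapted F a) (hb_adapted : Adapted F b)
    (hy_int : ∀ k, Integrable (y k) μ) (hu_int : ∀ k, Integrable (u k) μ)
    (ha_int : ∀ k, Integrable (a k) μ) (hb_int : ∀ k, Integrable (b k) μ)
    (hy_nonneg : ∀ k, ∀ᵐ ω ∂μ, 0 ≤ y k ω)
    (hu_nonneg : ∀ k, ∀ᵐ ω ∂μ, 0 ≤ u k ω)
    (ha_nonneg : ∀ k, ∀ᵐ ω ∂μ, 0 ≤ a k ω)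
    (hb_nonneg : ∀ k, ∀ᵐ ω ∂μ, 0 ≤ b k ω)
    (ha_sum : ∀ᵐ ω ∂μ, Summable fun k => a k ω)
    (hb_sum : ∀ᵐ ω ∂μ, Summable fun k => b k ω)
    (hrec : ∀ k, ∀ᵐ ω ∂μ,
      (μ[y (k + 1) | F k]) ω ≤ (1 + a k ω) * y k ω - u k ω + b k ω) :
    ∀ᵐ ω ∂μ, (∃ l : ℝ, Tendsto (fun k => y k ω) atTop (nhds l)) ∧
      Summable fun k => u k ω := by
  -- the good a.e. set of pointwise nonnegativity
  have hgood : ∀ᵐ ω ∂μ, (∀ k, 0 ≤ y k ω) ∧ (∀ k, 0 ≤ u k ω) ∧ (∀ k, 0 ≤ a k ω) ∧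
      (∀ k, 0 ≤ b k ω) :=
    (ae_all_iff.2 hy_nonneg).and ((ae_all_iff.2 hu_nonneg).and
      ((ae_all_iff.2 ha_nonneg).and (ae_all_iff.2 hb_nonneg)))
  -- measurability of things w.r.t. the ambient σ-algebra
  have hPm0 : ∀ n, StronglyMeasurable (rsP a n) := fun n =>
    (rsP_stronglyMeasurable ha_adapted (Nat.le_succ n)).mono (F.le n)
  -- integrability of quotients
  have hdiv_int : ∀ (g : Ω → ℝ), Integrable g μ → ∀ n, Integrable (fun ω => g ω / rsP a n ω) μ := by
    intro g hg n
    refine Integrable.mono hg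
      ((hg.1.aemeasurable.div (hPm0 n).measurable.aemeasurable).aestronglyMeasurable) ?_
    filter_upwards [hgood] with ω hω
    have h1 : 1 ≤ rsP a n ω := rsP_one_le hω.2.2.1 n
    rw [norm_div]
    rw [Real.norm_eq_abs (rsP a n ω), abs_of_pos (by linarith : (0:ℝ) < rsP a n ω)]
    exact div_le_self (norm_nonneg _) h1
  have hS_int : ∀ (g : ℕ → Ω → ℝ), (∀ j, Integrable (g j) μ) → ∀ n,
      Integrable (rsS g a n) μ := by
    intro g hg n
    show Integrable (fun ω => ∑ j ∈ Finset.range n, g j ω / rsP a (j + 1) ω) μ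
    exact integrable_finset_sum _ fun j _ => hdiv_int (g j) (hg j) (j + 1)
  have hW_int : ∀ k, Integrable (rsW y u b a k) μ := by
    intro k
    show Integrable (fun ω => y k ω / rsP a k ω + rsS u a k ω - rsS b a k ω) μ
    exact (((hdiv_int (y k) (hy_int k) k).add (hS_int u hu_int k)).sub (hS_int b hb_int k))
  have hW_adapted : StronglyAdapted F (rsW y u b a) := fun k =>
    rsW_stronglyMeasurable hy_adapted hu_adapted hb_adapted ha_adapted k
  -- W is a supermartingale
  have hWsup : Supermartingale (rsW y u b a) F μ := by
    refine supermartingale_nat hW_adapted hW_int ?_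
    intro i
    have hsplit : rsW y u b a (i + 1) = (fun ω => (rsP a (i + 1) ω)⁻¹ * y (i + 1) ω)
        + fun ω => rsS u a (i + 1) ω - rsS b a (i + 1) ω := by
      funext ω
      show y (i+1) ω / rsP a (i+1) ω + rsS u a (i+1) ω - rsS b a (i+1) ω = _
      simp only [Pi.add_apply]
      rw [div_eq_inv_mul]
      ring
    have hint1 : Integrable (fun ω => (rsP a (i + 1) ω)⁻¹ * y (i + 1) ω) μ := by
      have := hdiv_int (y (i + 1)) (hy_int (i + 1)) (i + 1)
      refine this.congr (Eventually.of_forall fun ω => ?_)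
      simp [div_eq_inv_mul]
    have hint2 : Integrable (fun ω => rsS u a (i + 1) ω - rsS b a (i + 1) ω) μ :=
      (hS_int u hu_int (i + 1)).sub (hS_int b hb_int (i + 1))
    have hadd := condExp_add (m := F i) (μ := μ) hint1 hint2
    have hmeas2 : StronglyMeasurable[F i] (fun ω => rsS u a (i + 1) ω - rsS b a (i + 1) ω) :=
      (rsS_stronglyMeasurable hu_adapted ha_adapted le_rfl).sub
        (rsS_stronglyMeasurable hb_adapted ha_adapted le_rfl)
    have heq2 : μ[(fun ω => rsS u a (i + 1) ω - rsS b a (i + 1) ω) | F i]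
        =ᵐ[μ] fun ω => rsS u a (i + 1) ω - rsS b a (i + 1) ω :=
      (condExp_of_stronglyMeasurable (F.le i) hmeas2 hint2).symm ▸ EventuallyEq.rfl
    have hmul : μ[(fun ω => (rsP a (i + 1) ω)⁻¹ * y (i + 1) ω) | F i]
        =ᵐ[μ] (fun ω => (rsP a (i + 1) ω)⁻¹) * μ[y (i + 1) | F i] := by
      have hfm : StronglyMeasurable[F i] (fun ω => (rsP a (i + 1) ω)⁻¹) :=
        ((rsP_stronglyMeasurable ha_adapted le_rfl).measurable.inv).stronglyMeasurable
      have := condExp_mul_of_stronglyMeasurable_left hfm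
        (by
          refine hint1.congr (Eventually.of_forall fun ω => ?_)
          simp [Pi.mul_apply])
        (hy_int (i + 1))
      refine EventuallyEq.trans ?_ this
      apply condExp_congr_ae
      exact Eventually.of_forall fun ω => by simp [Pi.mul_apply]
    rw [hsplit]
    refine (hadd.le.trans ?_)
    calc μ[(fun ω => (rsP a (i+1) ω)⁻¹ * y (i+1) ω)|F i]
          + μ[(fun ω => rsS u a (i+1) ω - rsS b a (i+1) ω)|F i]
        =ᵐ[μ] ((fun ω => (rsP a (i + 1) ω)⁻¹) * μ[y (i + 1) | F i])
          + fun ω => rsS u a (i + 1) ω - rsS b a (i + 1) ω := hmul.add heq2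
      _ ≤ᵐ[μ] rsW y u b a i := by
        filter_upwards [hgood, hrec i] with ω hω hrecω
        have hP1 : 1 ≤ rsP a (i + 1) ω := rsP_one_le hω.2.2.1 _
        have hPpos : 0 < rsP a (i + 1) ω := by linarith
        have hPipos : 0 < rsP a i ω := rsP_pos hω.2.2.1 i
        have hapos : 0 < 1 + a i ω := by linarith [hω.2.2.1 i]
        simp only [Pi.add_apply, Pi.mul_apply]
        have hkey : (rsP a (i + 1) ω)⁻¹ * ((1 + a i ω) * y i ω - u i ω + b i ω)
            + u i ω / rsP a (i + 1) ω - b i ω / rsP a (i + 1) ω = y i ω / rsP a i ω := by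
          rw [rsP_succ]
          field_simp
          ring
        have hmono : (rsP a (i + 1) ω)⁻¹ * (μ[y (i + 1) | F i]) ω
            ≤ (rsP a (i + 1) ω)⁻¹ * ((1 + a i ω) * y i ω - u i ω + b i ω) :=
          mul_le_mul_of_nonneg_left hrecω (inv_nonneg.2 hPpos.le)
        show (rsP a (i + 1) ω)⁻¹ * (μ[y (i + 1) | F i]) ω
            + (rsS u a (i + 1) ω - rsS b a (i + 1) ω) ≤ rsW y u b a i ω
        rw [rsS_succ, rsS_succ]
        show _ ≤ y i ω / rsP a i ω + rsS u a i ω - rsS b a i ω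
        linarith
  -- the per-truncation-level convergence statement
  have Hc : ∀ c : ℕ, ∀ᵐ ω ∂μ, (∀ k, rsS b a (k + 1) ω ≤ (c : ℝ)) →
      ∃ l, Tendsto (fun k => rsW y u b a k ω) atTop (nhds l) := by
    intro c
    set χ : ℕ → Ω → ℝ := fun k => Set.indicator {ω | rsS b a (k + 1) ω ≤ (c : ℝ)} (fun _ => 1)
      with hχdef
    set Wc : ℕ → Ω → ℝ := fun k ω => rsW y u b a 0 ω
      + ∑ j ∈ Finset.range k, χ j ω * (rsW y u b a (j + 1) ω - rsW y u b a j ω) with hWcdef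
    have hχ_meas : ∀ k, StronglyMeasurable[F k] (χ k) := by
      intro k
      apply stronglyMeasurable_const.indicator
      have : {ω | rsS b a (k + 1) ω ≤ (c : ℝ)} = rsS b a (k + 1) ⁻¹' Set.Iic (c : ℝ) := rfl
      rw [this]
      exact (rsS_stronglyMeasurable hb_adapted ha_adapted le_rfl).measurable measurableSet_Iic
    have hχ_apply : ∀ k ω, χ k ω = if rsS b a (k + 1) ω ≤ (c : ℝ) then (1:ℝ) else 0 := by
      intro k ω
      rw [hχdef]
      simp [Set.indicator_apply]
    have hχ_bd : ∀ k ω, ‖χ k ω‖ ≤ 1 := by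
      intro k ω
      rw [hχ_apply]
      split <;> simp
    have hχ_nonneg : ∀ k ω, 0 ≤ χ k ω := by
      intro k ω
      rw [hχ_apply]
      split <;> simp
    have hterm_int : ∀ j, Integrable (fun ω => χ j ω * (rsW y u b a (j + 1) ω
        - rsW y u b a j ω)) μ := fun j =>
      Integrable.bdd_mul ((hW_int (j + 1)).sub (hW_int j))
        ((hχ_meas j).mono (F.le j)).aestronglyMeasurable (Eventually.of_forall (hχ_bd j))
    have hWc_int : ∀ k, Integrable (Wc k) μ := by
      intro k
      show Integrable (fun ω => rsW y u b a 0 ω + ∑ j ∈ Finset.range k, χ j ω *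
        (rsW y u b a (j + 1) ω - rsW y u b a j ω)) μ
      exact (hW_int 0).add (integrable_finset_sum _ fun j _ => hterm_int j)
    have hWc_adapted : StronglyAdapted F Wc := by
      intro k
      show StronglyMeasurable[F k] fun ω => rsW y u b a 0 ω + ∑ j ∈ Finset.range k, χ j ω *
        (rsW y u b a (j + 1) ω - rsW y u b a j ω)
      refine ((hW_adapted 0).mono (F.mono (Nat.zero_le k))).add ?_
      refine Finset.stronglyMeasurable_fun_sum _ fun j hj => ?_
      have hjk : j + 1 ≤ k := Finset.mem_range.1 hj
      exact ((hχ_meas j).mono (F.mono (by omega))).mul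
        (((hW_adapted (j + 1)).mono (F.mono hjk)).sub ((hW_adapted j).mono (F.mono (by omega))))
    have hWcsup : Supermartingale Wc F μ := by
      refine supermartingale_nat hWc_adapted hWc_int ?_
      intro k
      have hsplit : Wc (k + 1) = Wc k + fun ω => χ k ω * (rsW y u b a (k + 1) ω
          - rsW y u b a k ω) := by
        funext ω
        show rsW y u b a 0 ω + ∑ j ∈ Finset.range (k+1), _ = _
        rw [Finset.sum_range_succ]
        simp only [Pi.add_apply]
        show _ = rsW y u b a 0 ω + ∑ j ∈ Finset.range k, χ j ω * (rsW y u b a (j + 1) ω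
          - rsW y u b a j ω) + χ k ω * (rsW y u b a (k + 1) ω - rsW y u b a k ω)
        ring
      rw [hsplit]
      have hadd := condExp_add (m := F k) (μ := μ) (hWc_int k) (hterm_int k)
      refine hadd.le.trans ?_
      have heq1 : μ[Wc k | F k] =ᵐ[μ] Wc k :=
        (condExp_of_stronglyMeasurable (F.le k) (hWc_adapted k) (hWc_int k)).symm ▸
          EventuallyEq.rfl
      have hsub := condExp_sub (m := F k) (μ := μ) (hW_int (k + 1)) (hW_int k)
      have heqWk : μ[rsW y u b a k | F k] =ᵐ[μ] rsW y u b a k :=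
        (condExp_of_stronglyMeasurable (F.le k) (hW_adapted k) (hW_int k)).symm ▸
          EventuallyEq.rfl
      have hmul : μ[(fun ω => χ k ω * (rsW y u b a (k + 1) ω - rsW y u b a k ω)) | F k]
          =ᵐ[μ] (χ k) * μ[(rsW y u b a (k + 1) - rsW y u b a k) | F k] := by
        have := condExp_mul_of_stronglyMeasurable_left (hχ_meas k)
          (by
            refine (hterm_int k).congr (Eventually.of_forall fun ω => ?_)
            simp [Pi.mul_apply, Pi.sub_apply])
          ((hW_int (k + 1)).sub (hW_int k))
        refine EventuallyEq.trans ?_ this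
        apply condExp_congr_ae
        exact Eventually.of_forall fun ω => by simp [Pi.mul_apply, Pi.sub_apply]
      filter_upwards [heq1, hmul, hsub, heqWk, hWsup.2.1 k (k + 1) (Nat.le_succ k)]
        with ω h1 h2 h3 h4 h5
      simp only [Pi.add_apply]
      rw [h1, h2]
      simp only [Pi.mul_apply]
      rw [h3]
      simp only [Pi.sub_apply]
      rw [h4]
      have : (μ[rsW y u b a (k + 1) | F k]) ω - rsW y u b a k ω ≤ 0 := by linarith
      nlinarith [hχ_nonneg k ω]
    -- pointwise stopped-process facts
    have hstop : ∀ᵐ ω ∂μ, ∀ k, (rsS b a (k + 1) ω ≤ (c:ℝ) → Wc k ω = rsW y u b a k ω) ∧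
        -(c:ℝ) ≤ Wc k ω := by
      filter_upwards [hgood] with ω hω
      refine rs_stop_aux (c:ℝ) (fun k => rsW y u b a k ω) (fun k => rsS b a k ω)
        (fun k => Wc k ω) (rsS_zero b a ω) (fun k => rsS_mono hω.2.2.2 hω.2.2.1 k)
        (fun k => ?_) ?_ (fun k => ?_) (Nat.cast_nonneg c)
      · show -(rsS b a k ω) ≤ y k ω / rsP a k ω + rsS u a k ω - rsS b a k ω
        have h1 : 0 ≤ y k ω / rsP a k ω := div_nonneg (hω.1 k) (rsP_pos hω.2.2.1 k).le
        have h2 : 0 ≤ rsS u a k ω := rsS_nonneg hω.2.1 hω.2.2.1 k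
        linarith
      · show rsW y u b a 0 ω + ∑ j ∈ Finset.range 0, _ = rsW y u b a 0 ω
        simp
      · show rsW y u b a 0 ω + ∑ j ∈ Finset.range (k+1), _ = _
        rw [Finset.sum_range_succ, hχ_apply]
        show rsW y u b a 0 ω + (∑ j ∈ Finset.range k, χ j ω * (rsW y u b a (j + 1) ω
          - rsW y u b a j ω) + _) = _
        ring
    -- L¹ bound
    have hint_le : ∀ n, ∫ ω, Wc n ω ∂μ ≤ ∫ ω, Wc 0 ω ∂μ := by
      intro n
      have h := hWcsup.2.1 0 n (Nat.zero_le n)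
      have heq : ∫ ω, Wc n ω ∂μ = ∫ ω, (μ[Wc n | F 0]) ω ∂μ :=
        (integral_condExp (F.le 0)).symm
      rw [heq]
      exact integral_mono_ae integrable_condExp (hWc_int 0) h
    have hWc0eq : ∫ ω, Wc 0 ω ∂μ = ∫ ω, y 0 ω ∂μ := by
      apply integral_congr_ae
      refine Eventually.of_forall fun ω => ?_
      show rsW y u b a 0 ω + ∑ j ∈ Finset.range 0, _ = y 0 ω
      show rsW y u b a 0 ω + 0 = y 0 ω
      rw [add_zero]
      show y 0 ω / rsP a 0 ω + rsS u a 0 ω - rsS b a 0 ω = y 0 ω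
      rw [rsP_zero, rsS_zero, rsS_zero, div_one, add_zero, sub_zero]
    have hbdd : ∀ n, eLpNorm (Wc n) 1 μ
        ≤ ((∫ ω, y 0 ω ∂μ + 2 * c).toNNReal : ENNReal) := by
      intro n
      have h1 : eLpNorm (Wc n) 1 μ = ENNReal.ofReal (∫ ω, ‖Wc n ω‖ ∂μ) := by
        rw [eLpNorm_one_eq_lintegral_enorm,
          ← ofReal_integral_norm_eq_lintegral_enorm (hWc_int n)]
      rw [h1]
      have h2 : ∫ ω, ‖Wc n ω‖ ∂μ ≤ ∫ ω, (Wc n ω + 2 * c) ∂μ := by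
        refine integral_mono_ae (hWc_int n).norm ((hWc_int n).add (integrable_const _)) ?_
        filter_upwards [hstop] with ω hω
        have hlb := (hω n).2
        rw [Real.norm_eq_abs]
        rcases abs_cases (Wc n ω) with ⟨h, _⟩ | ⟨h, _⟩ <;>
          [skip; skip] <;>
          · rw [h]
            have : (0:ℝ) ≤ (c:ℝ) := Nat.cast_nonneg c
            linarith
      have h3 : ∫ ω, (Wc n ω + 2 * c) ∂μ = ∫ ω, Wc n ω ∂μ + 2 * c := by
        rw [integral_add (hWc_int n) (integrable_const _), integral_const]
        simp
      have h4 : ∫ ω, ‖Wc n ω‖ ∂μ ≤ ∫ ω, y 0 ω ∂μ + 2 * c := by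
        rw [h3] at h2
        have := hint_le n
        rw [hWc0eq] at this
        linarith
      calc ENNReal.ofReal (∫ ω, ‖Wc n ω‖ ∂μ) ≤ ENNReal.ofReal (∫ ω, y 0 ω ∂μ + 2 * c) :=
            ENNReal.ofReal_le_ofReal h4
        _ = ((∫ ω, y 0 ω ∂μ + 2 * c).toNNReal : ENNReal) := rfl
    -- convergence of the stopped process
    have hconv : ∀ᵐ ω ∂μ, ∃ l, Tendsto (fun n => Wc n ω) atTop (nhds l) := by
      have hneg : Submartingale (-Wc) F μ := hWcsup.neg
      have hbdd' : ∀ n, eLpNorm ((-Wc) n) 1 μ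
          ≤ ((∫ ω, y 0 ω ∂μ + 2 * c).toNNReal : ENNReal) := by
        intro n
        rw [show (-Wc) n = -(Wc n) from rfl, eLpNorm_neg]
        exact hbdd n
      filter_upwards [hneg.exists_ae_tendsto_of_bdd hbdd'] with ω ⟨l, hl⟩
      refine ⟨-l, ?_⟩
      have := hl.neg
      refine this.congr fun n => ?_
      simp
    filter_upwards [hstop, hconv] with ω hst ⟨l, hl⟩ hTall
    refine ⟨l, hl.congr fun k => (hst k).1 (hTall k)⟩
  -- combine everything
  filter_upwards [hgood, ae_all_iff.2 Hc, ha_sum, hb_sum] with ω hω hc hsa hsb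
  have ha0 := hω.2.2.1
  have hb0 := hω.2.2.2
  have hbP : Summable (fun j => b j ω / rsP a (j + 1) ω) :=
    Summable.of_nonneg_of_le (fun j => div_nonneg (hb0 j) (rsP_pos ha0 _).le)
      (fun j => div_le_self (hb0 j) (rsP_one_le ha0 _)) hsb
  obtain ⟨c, hc'⟩ := exists_nat_ge (∑' j, b j ω / rsP a (j + 1) ω)
  have hTall : ∀ k, rsS b a (k + 1) ω ≤ (c : ℝ) := by
    intro k
    refine le_trans ?_ hc'
    exact hbP.sum_le_tsum _ (fun j _ => div_nonneg (hb0 j) (rsP_pos ha0 _).le)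
  have hWconv := hc c hTall
  exact rs_pointwise (fun k => y k ω) (fun k => u k ω) (fun k => a k ω) (fun k => b k ω)
    hω.1 hω.2.1 ha0 hb0 hsa hsb hWconv
end

section
/- Let X ⊆ ℝ^d be nonempty closed convex and H : X → ℝ^d continuous. Given x ∈ X with x ≠ Π_X(x − βH(x)) for some β > 0, and parameters λ, θ ∈ (0,1), α̂ ∈ (0,1], the line search that seeks the largest α ∈ {θ^ℓ α̂ : ℓ ∈ ℕ₀} with ⟨H(αΠ_X(g) + (1−α)x), x − Π_X(g)⟩ ≥ (λ/β)‖x − Π_X(g)‖², where g := x − βH(x), terminates after finitely many iterations. That is, there exists ℓ ∈ ℕ₀ such that α = θ^ℓ α̂ satisfies the displayed inequality. -/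
/-- `p` is the Euclidean metric projection of `y` onto `C`. -/
def IsProjOn {E : Type*} [NormedAddCommGroup E] (C : Set E) (y p : E) : Prop :=
  p ∈ C ∧ ∀ c ∈ C, dist y p ≤ dist y c

/-- Finite termination of the hyperplane line search: if `x ≠ Π_X(x − βH(x))`,
then some `α = θ^ℓ α̂` on the geometric grid satisfies
`⟨H(αΠ_X(g) + (1−α)x), x − Π_X(g)⟩ ≥ (λ/β)‖x − Π_X(g)‖²`. -/
theorem hyperplane_line_search_terminates
    {d : ℕ} (X : Set (EuclideanSpace ℝ (Fin d)))
    (hXne : X.Nonempty) (hXc : IsClosed X) (hXconv : Convex ℝ X)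
    (H : EuclideanSpace ℝ (Fin d) → EuclideanSpace ℝ (Fin d))
    (hH : ContinuousOn H X)
    (x : EuclideanSpace ℝ (Fin d)) (hx : x ∈ X)
    (β : ℝ) (hβ : 0 < β)
    (lam θ αhat : ℝ) (hlam : lam ∈ Set.Ioo (0:ℝ) 1) (hθ : θ ∈ Set.Ioo (0:ℝ) 1)
    (hαhat : αhat ∈ Set.Ioc (0:ℝ) 1)
    (p : EuclideanSpace ℝ (Fin d))
    (hp : IsProjOn X (x - β • H x) p)
    (hne : x ≠ p) :
    ∃ ℓ : ℕ,
      (lam / β) * ‖x - p‖ ^ 2 ≤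
        (inner ℝ (H ((θ ^ ℓ * αhat) • p + (1 - θ ^ ℓ * αhat) • x)) (x - p) : ℝ) := by
  obtain ⟨hpX, hpmin⟩ := hp
  set y : EuclideanSpace ℝ (Fin d) := x - β • H x with hy
  -- obtuse angle property
  have hnorm_inf : ‖y - p‖ = ⨅ w : X, ‖y - w‖ := by
    haveI : Nonempty X := hXne.to_subtype
    apply le_antisymm
    · exact le_ciInf fun w => by
        simpa [dist_eq_norm] using hpmin w w.2
    · exact ciInf_le ⟨0, fun r ⟨w, hw⟩ => hw ▸ norm_nonneg _⟩ (⟨p, hpX⟩ : X)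
  have hobtuse : ∀ w ∈ X, (inner ℝ (y - p) (w - p) : ℝ) ≤ 0 :=
    (norm_eq_iInf_iff_real_inner_le_zero hXconv hpX).mp hnorm_inf
  have hkey : ‖x - p‖ ^ 2 ≤ β * (inner ℝ (H x) (x - p) : ℝ) := by
    have := hobtuse x hx
    have hexp : (inner ℝ (y - p) (x - p) : ℝ)
        = (inner ℝ (x - p) (x - p) : ℝ) - β * (inner ℝ (H x) (x - p) : ℝ) := by
      rw [show y - p = (x - p) - β • H x from by rw [hy]; abel, inner_sub_left,
        real_inner_smul_left]
    rw [hexp] at this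
    rw [← real_inner_self_eq_norm_sq]
    linarith
  have hnpos : 0 < ‖x - p‖ ^ 2 := by
    have h0 : (0:ℝ) < ‖x - p‖ := norm_pos_iff.mpr (sub_ne_zero.mpr hne)
    positivity
  have hlt : (lam / β) * ‖x - p‖ ^ 2 < (inner ℝ (H x) (x - p) : ℝ) := by
    rw [div_mul_eq_mul_div, div_lt_iff₀ hβ]
    nlinarith [hlam.2, hnpos, hkey]
  -- the sequence of points
  set c : ℕ → EuclideanSpace ℝ (Fin d) :=
    fun ℓ => (θ ^ ℓ * αhat) • p + (1 - θ ^ ℓ * αhat) • x with hc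
  have hαmem : ∀ ℓ : ℕ, 0 ≤ θ ^ ℓ * αhat ∧ θ ^ ℓ * αhat ≤ 1 := by
    intro ℓ
    constructor
    · exact mul_nonneg (pow_nonneg hθ.1.le _) hαhat.1.le
    · calc θ ^ ℓ * αhat ≤ 1 * 1 :=
        mul_le_mul (pow_le_one₀ hθ.1.le hθ.2.le) hαhat.2 hαhat.1.le zero_le_one
      _ = 1 := one_mul 1
  have hcX : ∀ ℓ, c ℓ ∈ X := fun ℓ => by
    have h := hαmem ℓ
    exact hXconv hpX hx h.1 (by linarith [h.2]) (by ring)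
  have htend0 : Filter.Tendsto (fun ℓ : ℕ => θ ^ ℓ * αhat) Filter.atTop (nhds 0) := by
    have := tendsto_pow_atTop_nhds_zero_of_lt_one hθ.1.le hθ.2
    simpa using this.mul_const αhat
  have hctend : Filter.Tendsto c Filter.atTop (nhds x) := by
    have : Filter.Tendsto c Filter.atTop (nhds ((0:ℝ) • p + (1 - 0 : ℝ) • x)) := by
      exact (htend0.smul_const p).add (((tendsto_const_nhds.sub htend0)).smul_const x)
    simpa using this
  have hctendW : Filter.Tendsto c Filter.atTop (nhdsWithin x X) :=
    tendsto_nhdsWithin_of_tendsto_nhds_of_eventually_within c hctend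
      (Filter.Eventually.of_forall hcX)
  have hHt : Filter.Tendsto (fun ℓ => H (c ℓ)) Filter.atTop (nhds (H x)) :=
    (hH x hx).tendsto.comp hctendW
  have hft : Filter.Tendsto (fun ℓ => (inner ℝ (H (c ℓ)) (x - p) : ℝ)) Filter.atTop
      (nhds (inner ℝ (H x) (x - p) : ℝ)) :=
    hHt.inner tendsto_const_nhds
  have hev : ∀ᶠ ℓ in Filter.atTop,
      (lam / β) * ‖x - p‖ ^ 2 < (inner ℝ (H (c ℓ)) (x - p) : ℝ) :=
    hft.eventually (eventually_gt_nhds hlt)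
  obtain ⟨ℓ, hℓ⟩ := hev.exists
  exact ⟨ℓ, hℓ.le⟩
end

section
/- Hyperplane projection recursion: let X ⊆ ℝ^d be closed convex, T : X → ℝ^d pseudo-monotone with x* ∈ X satisfying ⟨T(x*), y − x*⟩ ≥ 0 for all y ∈ X. Let x^k ∈ X, z^k ∈ X, e ∈ ℝ^d (the oracle error), v := T(z^k) + e with v ≠ 0, γ := ⟨v, x^k − z^k⟩/‖v‖² > 0, y^k := x^k − γ v, and x^{k+1} := Π_X(y^k). Then ‖x^{k+1} − x*‖² ≤ ‖x^k − x*‖² − ‖y^k − x^k‖² + 2γ ⟨e, x* − z^k⟩. -/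
set_option maxHeartbeats 1000000 in
/-- Recursive error bound for the hyperplane projection step:
`‖x^{k+1} − x*‖² ≤ ‖x^k − x*‖² − ‖y^k − x^k‖² + 2γ⟨e, x* − z^k⟩`. -/
theorem hyperplane_projection_recursion
    {d : ℕ} (X : Set (EuclideanSpace ℝ (Fin d)))
    (hXne : X.Nonempty) (hXc : IsClosed X) (hXconv : Convex ℝ X)
    (T : EuclideanSpace ℝ (Fin d) → EuclideanSpace ℝ (Fin d))
    (hpseudo : ∀ x ∈ X, ∀ z ∈ X,
      0 ≤ (inner ℝ (T x) (z - x) : ℝ) → 0 ≤ (inner ℝ (T z) (z - x) : ℝ))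
    (xstar : EuclideanSpace ℝ (Fin d)) (hxstar : xstar ∈ X)
    (hsol : ∀ y ∈ X, 0 ≤ (inner ℝ (T xstar) (y - xstar) : ℝ))
    (xk zk : EuclideanSpace ℝ (Fin d)) (hxk : xk ∈ X) (hzk : zk ∈ X)
    (e : EuclideanSpace ℝ (Fin d))
    (v : EuclideanSpace ℝ (Fin d)) (hv : v = T zk + e) (hvne : v ≠ 0)
    (γ : ℝ) (hγ : γ = (inner ℝ v (xk - zk) : ℝ) / ‖v‖ ^ 2) (hγpos : 0 < γ)
    (yk : EuclideanSpace ℝ (Fin d)) (hyk : yk = xk - γ • v)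
    (xk1 : EuclideanSpace ℝ (Fin d)) (hxk1 : IsProjOn X yk xk1) :
    ‖xk1 - xstar‖ ^ 2 ≤ ‖xk - xstar‖ ^ 2 - ‖yk - xk‖ ^ 2 +
      2 * γ * (inner ℝ e (xstar - zk) : ℝ) := by
  have hmem := hxk1.1
  haveI : Nonempty X := hXne.to_subtype
  -- variational inequality for the projection
  have hinf : ‖yk - xk1‖ = ⨅ w : X, ‖yk - (w : EuclideanSpace ℝ (Fin d))‖ := by
    apply le_antisymm
    · apply le_ciInf
      intro w
      simpa [dist_eq_norm] using hxk1.2 w w.2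
    · have hbdd : BddBelow (Set.range fun w : X => ‖yk - (w : EuclideanSpace ℝ (Fin d))‖) :=
        ⟨0, by rintro x ⟨w, rfl⟩; exact norm_nonneg _⟩
      exact ciInf_le hbdd ⟨xk1, hmem⟩
  have hvar : ∀ w ∈ X, (inner ℝ (yk - xk1) (w - xk1) : ℝ) ≤ 0 :=
    (norm_eq_iInf_iff_real_inner_le_zero hXconv hmem).mp hinf
  have hab : (inner ℝ (yk - xk1) (xstar - xk1) : ℝ) ≤ 0 := hvar xstar hxstar
  -- step 1: ‖xk1 - xstar‖² ≤ ‖yk - xstar‖²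
  have h1 : ‖xk1 - xstar‖ ^ 2 ≤ ‖yk - xstar‖ ^ 2 := by
    have hrw : yk - xstar = (yk - xk1) - (xstar - xk1) := by abel
    have hexp := @norm_sub_sq_real (EuclideanSpace ℝ (Fin d)) _ _ (yk - xk1) (xstar - xk1)
    have hrev : ‖xk1 - xstar‖ = ‖xstar - xk1‖ := norm_sub_rev _ _
    rw [hrw, hrev]
    nlinarith [sq_nonneg ‖yk - xk1‖]
  -- pseudo-monotonicity
  have hpm : 0 ≤ (inner ℝ (T zk) (zk - xstar) : ℝ) :=
    hpseudo xstar hxstar zk hzk (hsol zk hzk)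
  -- gamma identity
  have hvnorm : (0:ℝ) < ‖v‖ ^ 2 := by exact pow_pos (norm_pos_iff.mpr hvne) 2
  have hγv : γ * ‖v‖ ^ 2 = (inner ℝ v (xk - zk) : ℝ) := by
    rw [hγ]; field_simp
  -- decomposition of inner products
  have hdec : (inner ℝ v (xk - xstar) : ℝ) =
      (inner ℝ v (xk - zk) : ℝ) + (inner ℝ (T zk) (zk - xstar) : ℝ)
        + (inner ℝ e (zk - xstar) : ℝ) := by
    rw [hv]
    have : xk - xstar = (xk - zk) + (zk - xstar) := by abel
    rw [this]
    simp only [inner_add_left, inner_add_right]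
    ring
  have hesym : (inner ℝ e (zk - xstar) : ℝ) = -(inner ℝ e (xstar - zk) : ℝ) := by
    rw [← inner_neg_right]; congr 1; abel
  -- step 2: expand ‖yk - xstar‖²
  have h2 : ‖yk - xstar‖ ^ 2 = ‖xk - xstar‖ ^ 2 - 2 * γ * (inner ℝ v (xk - xstar) : ℝ)
      + γ ^ 2 * ‖v‖ ^ 2 := by
    have hrw : yk - xstar = (xk - xstar) - γ • v := by rw [hyk]; abel
    rw [hrw, @norm_sub_sq_real (EuclideanSpace ℝ (Fin d)) _ _,
      real_inner_smul_right, norm_smul, Real.norm_eq_abs, abs_of_pos hγpos, mul_pow,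
      real_inner_comm (xk - xstar) v]
    ring
  have h3 : ‖yk - xk‖ ^ 2 = γ ^ 2 * ‖v‖ ^ 2 := by
    have hrw : yk - xk = -(γ • v) := by rw [hyk]; abel
    rw [hrw, norm_neg, norm_smul, mul_pow, Real.norm_eq_abs, sq_abs]
  nlinarith [mul_nonneg hγpos.le hpm, mul_pos hγpos hvnorm]
end
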